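/- arXiv:0811.3567 — 5 statements merged into one kernel-verified Lean document; each statement's English description precedes it below -/
import Mathlib

section
/- Let p be a prime, Γ = (Z_p)^n, and K a field of characteristic different from p containing a primitive p-th root of unity α. Then every commutation factor ε on Γ over K has the form ε(i,j) = α^{φ(i,j)} for a unique Z_p-bilinear form φ on (Z_p)^n; moreover φ is symmetric if p=2 and skew-symmetric (hence ε proper) if p ≥ 3. -/
/-- commutation factors on `(ℤ_p)^n` over a field of characteristic `≠ p`
containing a primitive `p`-th root of unity `α` are exactly `α^{φ(i,j)}` for a unique
`ℤ_p`-bilinear form `φ`, symmetric when `p = 2`, skew-symmetric (and `ε` proper) when `p ≥ 3`. -/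
theorem commutation_factor_on_zmod_pow {K : Type*} [Field K] (p : ℕ) [Fact p.Prime] (n : ℕ)
    (hchar : ringChar K ≠ p)
    (α : K) (hα : α ^ p = 1) (hα1 : α ≠ 1)
    (ε : (Fin n → ZMod p) → (Fin n → ZMod p) → K)
    (h1 : ∀ i j, ε i j * ε j i = 1)
    (h2 : ∀ i j k, ε i (j + k) = ε i j * ε i k)
    (h3 : ∀ i j k, ε (i + j) k = ε i k * ε j k) :
    ∃ φ : LinearMap.BilinForm (ZMod p) (Fin n → ZMod p),
      (∀ i j, ε i j = α ^ (φ i j).val) ∧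
      (∀ ψ : LinearMap.BilinForm (ZMod p) (Fin n → ZMod p),
        (∀ i j, ε i j = α ^ (ψ i j).val) → ψ = φ) ∧
      (p = 2 → ∀ i j, φ i j = φ j i) ∧
      (3 ≤ p → (∀ i j, φ i j = - φ j i) ∧ (∀ i, ε i i = 1)) := by
  have hp : p.Prime := Fact.out
  have hp0 : 0 < p := hp.pos
  -- α has order p
  have hord : orderOf α = p := by
    rcases (Nat.dvd_prime hp).mp (orderOf_dvd_of_pow_eq_one hα) with h | h
    · exact absurd (orderOf_eq_one_iff.mp h) hα1
    · exact h
  have hprim : IsPrimitiveRoot α p := hord ▸ IsPrimitiveRoot.orderOf α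
  -- powers of α indexed by ZMod p
  have hpowadd : ∀ a b : ZMod p, α ^ (a + b).val = α ^ a.val * α ^ b.val := by
    intro a b
    have h := pow_mod_orderOf α (a.val + b.val)
    rw [hord] at h
    rw [ZMod.val_add, h, pow_add]
  have hinj : ∀ a b : ZMod p, α ^ a.val = α ^ b.val → a = b := by
    intro a b h
    have := pow_injOn_Iio_orderOf (x := α)
    have ha : a.val ∈ Set.Iio (orderOf α) := by
      simp [hord, ZMod.val_lt]
    have hb : b.val ∈ Set.Iio (orderOf α) := by
      simp [hord, ZMod.val_lt]
    exact ZMod.val_injective p (this ha hb h)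
  -- ε never zero, ε i 0 = 1, ε 0 j = 1
  have hne : ∀ i j, ε i j ≠ 0 := by
    intro i j h
    have := h1 i j
    rw [h, zero_mul] at this
    exact zero_ne_one this
  have hi0 : ∀ i, ε i 0 = 1 := by
    intro i
    have h := h2 i 0 0
    rw [add_zero] at h
    exact (mul_left_cancel₀ (hne i 0) (show ε i 0 * 1 = ε i 0 * ε i 0 by rw [mul_one]; exact h)).symm
  have h0j : ∀ j, ε 0 j = 1 := by
    intro j
    have h := h3 0 0 j
    rw [add_zero] at h
    exact (mul_left_cancel₀ (hne 0 j) (show ε 0 j * 1 = ε 0 j * ε 0 j by rw [mul_one]; exact h)).symm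
  -- every ε i j is a p-th root of unity
  have hroot : ∀ i j, (ε i j) ^ p = 1 := by
    intro i j
    have key : ∀ m : ℕ, ε i ((m : ZMod p) • j) = (ε i j) ^ m := by
      intro m
      induction m with
      | zero => simpa using hi0 i
      | succ m ih =>
        have : ((m + 1 : ℕ) : ZMod p) • j = (m : ZMod p) • j + j := by
          push_cast; rw [add_smul, one_smul]
        rw [this, h2, ih, pow_succ]
    have := key p
    rw [ZMod.natCast_self, zero_smul, hi0] at this
    exact this.symm
  -- define the exponent function
  have hex : ∀ i j, ∃ c : ZMod p, ε i j = α ^ c.val := by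
    intro i j
    obtain ⟨k, hk, hke⟩ := hprim.eq_pow_of_pow_eq_one (hroot i j)
    exact ⟨(k : ZMod p), by rw [ZMod.val_cast_of_lt hk, hke]⟩
  choose f hf using hex
  -- additivity of f
  have hfadd_r : ∀ i j k, f i (j + k) = f i j + f i k := by
    intro i j k
    apply hinj
    rw [← hf, h2, hf, hf, hpowadd]
  have hfadd_l : ∀ i j k, f (i + j) k = f i k + f j k := by
    intro i j k
    apply hinj
    rw [← hf, h3, hf, hf, hpowadd]
  have hf0r : ∀ i, f i 0 = 0 := by
    intro i
    apply hinj
    rw [← hf, hi0, ZMod.val_zero, pow_zero]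
  have hf0l : ∀ j, f 0 j = 0 := by
    intro j
    apply hinj
    rw [← hf, h0j, ZMod.val_zero, pow_zero]
  -- skew-symmetry of f (always)
  have hskew : ∀ i j, f i j = - f j i := by
    intro i j
    have : f i j + f j i = 0 := by
      apply hinj
      rw [hpowadd, ← hf, ← hf, h1, ZMod.val_zero, pow_zero]
    linear_combination this
  -- build the bilinear form
  let F : (Fin n → ZMod p) → ((Fin n → ZMod p) →ₗ[ZMod p] ZMod p) := fun i =>
    AddMonoidHom.toZModLinearMap p
      { toFun := f i, map_zero' := hf0r i, map_add' := hfadd_r i }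
  let G : (Fin n → ZMod p) →+ ((Fin n → ZMod p) →ₗ[ZMod p] ZMod p) :=
    { toFun := F
      map_zero' := LinearMap.ext fun j => hf0l j
      map_add' := fun i i' => LinearMap.ext fun j => hfadd_l i i' j }
  refine ⟨AddMonoidHom.toZModLinearMap p G, fun i j => hf i j, ?_, ?_, ?_⟩
  · intro ψ hψ
    exact LinearMap.ext₂ fun i j => hinj _ _ ((hψ i j).symm.trans (hf i j))
  · intro hp2 i j
    have h := hskew i j
    show f i j = f j i
    have h2z : (2 : ZMod p) = 0 := by
      rw [show (2 : ZMod p) = ((2 : ℕ) : ZMod p) by norm_cast, ← hp2, ZMod.natCast_self]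
    rw [h]
    exact neg_eq_of_add_eq_zero_left (by rw [← two_mul, h2z, zero_mul])
  · intro hp3
    refine ⟨hskew, fun i => ?_⟩
    have h2ne : (2 : ZMod p) ≠ 0 := by
      intro h
      have := (ZMod.natCast_eq_zero_iff 2 p).mp (by exact_mod_cast h)
      have := Nat.le_of_dvd (by norm_num) this
      omega
    have : f i i = 0 := by
      have h := hskew i i
      have h2 : (2 : ZMod p) * f i i = 0 := by ring_nf; linear_combination h
      exact (mul_eq_zero.mp h2).resolve_left h2ne
    rw [hf i i, this, ZMod.val_zero, pow_zero]
end

section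
/- Let A = M_D(ℂ) be the complex D×D matrix algebra with an elementary Γ-grading given by a map φ: {1,…,D} → Γ (so the matrix unit E_ij has degree φ(i)-φ(j)), and ε a commutation factor on Γ. Then the ε-center of A is trivial: Z_ε(A) = ℂ·1. -/
/-- The homogeneous component of degree `α` of the elementary `Γ`-grading on `M_D(ℂ)`
induced by `φ : Fin D → Γ`: matrix units `E i j` have degree `φ i - φ j`. -/
noncomputable def elemGrading {Γ : Type*} [AddCommGroup Γ] {D : ℕ} (φ : Fin D → Γ) (α : Γ) :
    Submodule ℂ (Matrix (Fin D) (Fin D) ℂ) where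
  carrier := {M | ∀ i j, φ i - φ j ≠ α → M i j = 0}
  add_mem' := by
    intro a b ha hb i j h
    simp [Matrix.add_apply, ha i j h, hb i j h]
  zero_mem' := by intro i j _; rfl
  smul_mem' := by
    intro c a ha i j h
    simp [Matrix.smul_apply, ha i j h]

/-- the ε-center of a matrix algebra with elementary grading is `ℂ·1`. -/
theorem elemGrading_epsCenter_trivial {Γ : Type*} [AddCommGroup Γ] {D : ℕ}
    (φ : Fin D → Γ) (ε : Γ → Γ → ℂ)
    (h1 : ∀ i j, ε i j * ε j i = 1)
    (h2 : ∀ i j k, ε i (j + k) = ε i j * ε i k)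
    (h3 : ∀ i j k, ε (i + j) k = ε i k * ε j k) :
    (∀ α, ∀ a ∈ elemGrading φ α,
      (∀ β, ∀ b ∈ elemGrading φ β, a * b = ε α β • (b * a)) →
      ∃ c : ℂ, a = c • (1 : Matrix (Fin D) (Fin D) ℂ)) ∧
    (∀ c : ℂ, ∀ β, ∀ b ∈ elemGrading φ β,
      (c • (1 : Matrix (Fin D) (Fin D) ℂ)) * b
        = ε 0 β • (b * (c • (1 : Matrix (Fin D) (Fin D) ℂ)))) := by
  have hne : ∀ i j : Γ, ε i j ≠ 0 := by
    intro i j h0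
    have := h1 i j
    rw [h0, zero_mul] at this
    exact zero_ne_one this
  have heps0 : ∀ k : Γ, ε 0 k = 1 := by
    intro k
    have h := h3 0 0 k
    rw [add_zero] at h
    have h' : ε 0 k * ε 0 k = ε 0 k * 1 := by rw [mul_one]; exact h.symm
    exact mul_left_cancel₀ (hne 0 k) h'
  have heps0' : ∀ k : Γ, ε k 0 = 1 := by
    intro k
    have h := h2 k 0 0
    rw [add_zero] at h
    have h' : ε k 0 * ε k 0 = ε k 0 * 1 := by rw [mul_one]; exact h.symm
    exact mul_left_cancel₀ (hne k 0) h'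
  have hstd : ∀ k l : Fin D, Matrix.single k l (1:ℂ) ∈ elemGrading φ (φ k - φ l) := by
    intro k l i j hij
    simp only [Matrix.single, Matrix.of_apply, ite_eq_right_iff, one_ne_zero]
    rintro ⟨rfl, rfl⟩
    exact absurd rfl hij
  constructor
  · intro α a ha hcomm
    -- off-diagonal vanishing
    have hoff : ∀ i k : Fin D, i ≠ k → a i k = 0 := by
      intro i k hik
      have h := hcomm (φ k - φ k) _ (hstd k k)
      have h' := congrFun (congrFun h i) k
      simp [Matrix.mul_apply, Matrix.single, Finset.sum_ite_eq,
        Matrix.smul_apply, hik, Ne.symm hik, sub_self, heps0'] at h'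
      simpa [hik, Ne.symm hik] using h'
    have hdiag : ∀ k l : Fin D, a k k = a l l := by
      intro k l
      by_cases hα : α = 0
      · subst hα
        have h := hcomm (φ k - φ l) _ (hstd k l)
        have h' := congrFun (congrFun h k) l
        simp [Matrix.mul_apply, Matrix.single, Finset.sum_ite_eq,
          Matrix.smul_apply, heps0] at h'
        simpa using h'
      · rw [ha k k (by simpa using (Ne.symm hα)), ha l l (by simpa using (Ne.symm hα))]
    rcases isEmpty_or_nonempty (Fin D) with hD | hD
    · exact ⟨0, by ext i j; exact (hD.false i).elim⟩
    · obtain ⟨i0⟩ := hD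
      refine ⟨a i0 i0, ?_⟩
      ext i j
      by_cases hij : i = j
      · subst hij
        simp [Matrix.smul_apply, Matrix.one_apply, hdiag i i0]
      · simp [Matrix.smul_apply, Matrix.one_apply, hij, hoff i j hij]
  · intro c β b hb
    rw [heps0, one_smul, Matrix.smul_mul, Matrix.mul_smul, one_mul, mul_one]
end

section
/- Let A = M_D(ℂ) with an elementary Γ-grading given by φ: {1,…,D} → Γ and commutation factor ε. Then tr_ε(A) = Σ_i ε(φ(i),φ(i)) a_{ii} defines an ε-trace on A (i.e. tr_ε(ab) = ε(|a|,|b|) tr_ε(ba) for homogeneous a,b), and every ε-trace on A is a scalar multiple of tr_ε. -/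
/-- The ε-trace on `M_D(ℂ)` for the elementary grading given by `φ`. -/
noncomputable def epsTrace {Γ : Type*} [AddCommGroup Γ] {D : ℕ} (φ : Fin D → Γ)
    (ε : Γ → Γ → ℂ) (M : Matrix (Fin D) (Fin D) ℂ) : ℂ :=
  ∑ i, ε (φ i) (φ i) * M i i

section aux

set_option linter.unusedSectionVars false

variable {Γ : Type*} [AddCommGroup Γ] (ε : Γ → Γ → ℂ)
  (h1 : ∀ i j, ε i j * ε j i = 1)
  (h2 : ∀ i j k, ε i (j + k) = ε i j * ε i k)
  (h3 : ∀ i j k, ε (i + j) k = ε i k * ε j k)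

include h1 in
lemma eps_ne_zero (a b : Γ) : ε a b ≠ 0 :=
  left_ne_zero_of_mul_eq_one (h1 a b)

include h1 h2 in
lemma eps_zero_right (a : Γ) : ε a 0 = 1 := by
  have h := (h2 a 0 0).symm
  rw [add_zero] at h
  exact mul_left_cancel₀ (eps_ne_zero ε h1 a 0) (by rw [h, mul_one])

include h1 h3 in
lemma eps_zero_left (b : Γ) : ε 0 b = 1 := by
  have h := (h3 0 0 b).symm
  rw [add_zero] at h
  exact mul_left_cancel₀ (eps_ne_zero ε h1 0 b) (by rw [mul_comm] at h; rw [h, mul_one])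

include h1 h2 h3 in
/-- The key identity: `ε (x-y) (y-x) * ε y y = ε x x`. -/
lemma eps_key (x y : Γ) : ε (x - y) (y - x) * ε y y = ε x x := by
  have e1 : ε (x - y) (y - x) = ε x y * ε x (-x) * (ε (-y) y * ε (-y) (-x)) := by
    rw [sub_eq_add_neg x y, sub_eq_add_neg y x, h3, h2, h2]
  have e2 : ε x (-x) * ε x x = 1 := by
    rw [← h2, neg_add_cancel, eps_zero_right ε h1 h2]
  have e3 : ε (-y) y * ε y y = 1 := by
    rw [← h3, neg_add_cancel, eps_zero_left ε h1 h3]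
  have e4 : ε (-y) (-x) * ε y (-x) = 1 := by
    rw [← h3, neg_add_cancel, eps_zero_left ε h1 h3]
  have e5 : ε y (-x) * ε y x = 1 := by
    rw [← h2, neg_add_cancel, eps_zero_right ε h1 h2]
  have e6 : ε x y * ε y x = 1 := h1 x y
  have e7 : ε x x * ε x x = 1 := h1 x x
  have hB : ε x (-x) = ε x x := by
    have h : ε x (-x) * ε x x = ε x x * ε x x := by rw [e2, e7]
    exact mul_right_cancel₀ (eps_ne_zero ε h1 x x) h
  have hD : ε (-y) (-x) = ε y x := by
    have h : ε (-y) (-x) * ε y (-x) = ε y x * ε y (-x) := by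
      rw [e4, mul_comm, e5]
    exact mul_right_cancel₀ (eps_ne_zero ε h1 y (-x)) h
  rw [e1, hB, hD]
  linear_combination (ε x x * ε x y * ε y x) * e3 + ε x x * e6

end aux

/-- `tr_ε` is an ε-trace on the elementary ε-graded matrix algebra, and
every ε-trace is a scalar multiple of it. -/
theorem epsTrace_is_epsTrace_and_unique {Γ : Type*} [AddCommGroup Γ] {D : ℕ}
    (φ : Fin D → Γ) (ε : Γ → Γ → ℂ)
    (h1 : ∀ i j, ε i j * ε j i = 1)
    (h2 : ∀ i j k, ε i (j + k) = ε i j * ε i k)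
    (h3 : ∀ i j k, ε (i + j) k = ε i k * ε j k) :
    (∀ α β, ∀ a ∈ elemGrading φ α, ∀ b ∈ elemGrading φ β,
      epsTrace φ ε (a * b) = ε α β * epsTrace φ ε (b * a)) ∧
    (∀ T : Matrix (Fin D) (Fin D) ℂ →ₗ[ℂ] ℂ,
      (∀ α β, ∀ a ∈ elemGrading φ α, ∀ b ∈ elemGrading φ β,
        T (a * b) = ε α β * T (b * a)) →
      ∃ c : ℂ, ∀ M, T M = c * epsTrace φ ε M) := by
  have hkey := eps_key ε h1 h2 h3
  constructor
  · intro α β a ha b hb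
    simp only [epsTrace, Matrix.mul_apply, Finset.mul_sum]
    conv_rhs => rw [Finset.sum_comm]
    refine Finset.sum_congr rfl fun i _ => Finset.sum_congr rfl fun k _ => ?_
    by_cases hak : a i k = 0
    · simp [hak]
    by_cases hbk : b k i = 0
    · simp [hbk]
    have hα : φ i - φ k = α := by
      by_contra h; exact hak (ha i k h)
    have hβ : φ k - φ i = β := by
      by_contra h; exact hbk (hb k i h)
    subst hα hβ
    linear_combination (-(a i k * b k i)) * hkey (φ i) (φ k)
  · intro T hT
    set E : Fin D → Fin D → Matrix (Fin D) (Fin D) ℂ :=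
      fun i j => Matrix.single i j 1 with hE
    have hEmul : ∀ i j k : Fin D, E i j * E j k = E i k := by
      intro i j k
      simp only [hE, Matrix.single_mul_single_same, mul_one]
    have hEmul0 : ∀ i j k l : Fin D, j ≠ k → E i j * E k l = 0 := by
      intro i j k l h
      simp only [hE]
      exact Matrix.single_mul_single_of_ne (c := (1:ℂ)) _ _ _ h _
    have hmem : ∀ i j, E i j ∈ elemGrading φ (φ i - φ j) := by
      intro i j k l h
      apply Matrix.single_apply_of_ne
      rintro ⟨rfl, rfl⟩
      exact h rfl
    have hoff : ∀ i j : Fin D, i ≠ j → T (E i j) = 0 := by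
      intro i j hij
      have h := hT (φ i - φ i) (φ i - φ j) (E i i) (hmem i i) (E i j) (hmem i j)
      rw [hEmul i i j, hEmul0 i j i i (Ne.symm hij)] at h
      simpa using h
    rcases Nat.eq_zero_or_pos D with hD | hD
    · refine ⟨0, fun M => ?_⟩
      subst hD
      have hM : M = 0 := Subsingleton.elim _ _
      simp [hM]
    have i0 : Fin D := ⟨0, hD⟩
    refine ⟨ε (φ i0) (φ i0) * T (E i0 i0), fun M => ?_⟩
    have hdiag : ∀ i, T (E i i) = ε (φ i0) (φ i0) * T (E i0 i0) * ε (φ i) (φ i) := by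
      intro i
      have h := hT (φ i - φ i0) (φ i0 - φ i) (E i i0) (hmem i i0) (E i0 i) (hmem i0 i)
      rw [hEmul i i0 i, hEmul i0 i i0] at h
      rw [h]
      linear_combination (T (E i0 i0) * ε (φ i0) (φ i0)) * hkey (φ i) (φ i0)
        - (ε (φ i - φ i0) (φ i0 - φ i) * T (E i0 i0)) * h1 (φ i0) (φ i0)
    have hexp : T M = ∑ i, ∑ j, M i j * T (E i j) := by
      conv_lhs => rw [Matrix.matrix_eq_sum_single M]
      rw [map_sum]
      refine Finset.sum_congr rfl fun i _ => ?_
      rw [map_sum]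
      refine Finset.sum_congr rfl fun j _ => ?_
      have h5 : Matrix.single i j (M i j) = M i j • E i j := by
        simp [hE, Matrix.smul_single]
      rw [h5, map_smul, smul_eq_mul]
    rw [hexp]
    have hdiagsum : ∀ i : Fin D, ∑ j, M i j * T (E i j) = M i i * T (E i i) := by
      intro i
      refine Finset.sum_eq_single i (fun j _ hj => ?_) (by simp)
      rw [hoff i j (Ne.symm hj), mul_zero]
    rw [Finset.sum_congr rfl fun i _ => hdiagsum i]
    simp only [epsTrace, Finset.mul_sum]
    refine Finset.sum_congr rfl fun i _ => ?_
    rw [hdiag i]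
    ring
end

section
/- Let A = M_D(ℂ) with an elementary Γ-grading and commutation factor ε. Then every homogeneous ε-derivation of A is inner: for each homogeneous ε-derivation X there exists M ∈ A (namely M = Σ_k X(E_{ka})E_{ak} for any fixed a) such that X(b) = [M,b]_ε for all b ∈ A. Hence Out_ε(A) = 0. -/
/-- `X` is a homogeneous ε-derivation of degree `g` for the elementary grading. -/
def IsEpsDerivation {Γ : Type*} [AddCommGroup Γ] {D : ℕ} (φ : Fin D → Γ)
    (ε : Γ → Γ → ℂ) (g : Γ)
    (X : Matrix (Fin D) (Fin D) ℂ →ₗ[ℂ] Matrix (Fin D) (Fin D) ℂ) : Prop :=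
  (∀ i, ∀ a ∈ elemGrading φ i, X a ∈ elemGrading φ (g + i)) ∧
  (∀ i, ∀ a ∈ elemGrading φ i, ∀ b, X (a * b) = X a * b + ε g i • (a * X b))

/-- The sum of all diagonal standard basis matrices is the identity. -/
lemma sum_stdBasisMatrix_diag_one {D : ℕ} :
    (∑ k : Fin D, Matrix.single k k (1 : ℂ)) = 1 := by
  ext i j
  rw [Matrix.sum_apply]
  simp only [Matrix.single, Matrix.of_apply, Matrix.one_apply, ite_and]
  rw [Finset.sum_ite_eq' Finset.univ i (fun k => if k = j then (1:ℂ) else 0)]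
  simp

/-- Multiplying `b` on the right by `E_{ka}` collects column `k` of `b` into column `a`. -/
lemma mul_stdBasisMatrix_eq_sum {D : ℕ} (a k : Fin D) (b : Matrix (Fin D) (Fin D) ℂ) :
    b * Matrix.single k a (1 : ℂ) = ∑ m, b m k • Matrix.single m a (1 : ℂ) := by
  ext p q
  rw [Matrix.mul_apply, Matrix.sum_apply]
  simp [Matrix.single, mul_ite, ite_and, Finset.sum_ite_eq, Finset.sum_ite_eq']

/-- Multiplying `b` on the left by `E_{ak}` collects row `k` of `b` into row `a`. -/
lemma stdBasisMatrix_mul_eq_sum {D : ℕ} (a k : Fin D) (b : Matrix (Fin D) (Fin D) ℂ) :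
    Matrix.single a k (1 : ℂ) * b = ∑ m, b k m • Matrix.single a m (1 : ℂ) := by
  ext p q
  rw [Matrix.mul_apply, Matrix.sum_apply]
  simp [Matrix.single, mul_ite, ite_and, Finset.sum_ite_eq, Finset.sum_ite_eq']

/-- Key linear-algebra identity: `(∑ₖ X(E_{ka}) E_{ak}) b = ∑ₖ X(b E_{ka}) E_{ak}`. -/
lemma key_sum_identity {D : ℕ} (a : Fin D)
    (X : Matrix (Fin D) (Fin D) ℂ →ₗ[ℂ] Matrix (Fin D) (Fin D) ℂ)
    (b : Matrix (Fin D) (Fin D) ℂ) :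
    (∑ k, X (Matrix.single k a 1) * Matrix.single a k 1) * b
      = ∑ k, X (b * Matrix.single k a 1) * Matrix.single a k 1 := by
  have hL : (∑ k, X (Matrix.single k a 1) * Matrix.single a k 1) * b
      = ∑ k, ∑ m, b k m • (X (Matrix.single k a 1) * Matrix.single a m 1) := by
    rw [Finset.sum_mul]
    refine Finset.sum_congr rfl fun k _ => ?_
    rw [mul_assoc, stdBasisMatrix_mul_eq_sum a k b, Finset.mul_sum]
    refine Finset.sum_congr rfl fun m _ => ?_
    rw [Matrix.mul_smul]
  have hR : (∑ k, X (b * Matrix.single k a 1) * Matrix.single a k 1)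
      = ∑ k, ∑ m, b m k • (X (Matrix.single m a 1) * Matrix.single a k 1) := by
    refine Finset.sum_congr rfl fun k _ => ?_
    rw [mul_stdBasisMatrix_eq_sum a k b, map_sum, Finset.sum_mul]
    refine Finset.sum_congr rfl fun m _ => ?_
    rw [map_smul, Matrix.smul_mul]
  rw [hL, hR, Finset.sum_comm]

/-- every homogeneous ε-derivation of an elementary ε-graded matrix
algebra is inner, generated by `M = Σ_k X(E_{ka}) E_{ak}` for any fixed index `a`. -/
theorem elemGrading_epsDerivation_inner {Γ : Type*} [AddCommGroup Γ] {D : ℕ}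
    (hD : 0 < D) (φ : Fin D → Γ) (ε : Γ → Γ → ℂ)
    (h1 : ∀ i j, ε i j * ε j i = 1)
    (h2 : ∀ i j k, ε i (j + k) = ε i j * ε i k)
    (h3 : ∀ i j k, ε (i + j) k = ε i k * ε j k)
    (g : Γ) (X : Matrix (Fin D) (Fin D) ℂ →ₗ[ℂ] Matrix (Fin D) (Fin D) ℂ)
    (hX : IsEpsDerivation φ ε g X) :
    ∀ a : Fin D,
      let M : Matrix (Fin D) (Fin D) ℂ :=
        ∑ k, X (Matrix.single k a 1) * Matrix.single a k 1
      ∀ β, ∀ b ∈ elemGrading φ β, X b = M * b - ε g β • (b * M) := by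
  intro a M β b hb
  have hM : M = ∑ k, X (Matrix.single k a 1) * Matrix.single a k 1 := rfl
  have hder := hX.2 β b hb
  have this1 : ∀ k : Fin D,
      X (b * Matrix.single k a 1) * Matrix.single a k 1
        = X b * Matrix.single k k 1
          + ε g β • (b * X (Matrix.single k a 1) * Matrix.single a k 1) := by
    intro k
    rw [hder (Matrix.single k a 1), add_mul, smul_mul_assoc, mul_assoc,
      Matrix.single_mul_single_same, mul_one]
  have step : M * b = X b + ε g β • (b * M) := by
    rw [hM, key_sum_identity a X b]
    simp only [this1]
    rw [Finset.sum_add_distrib, ← Finset.mul_sum, sum_stdBasisMatrix_diag_one, mul_one]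
    congr 1
    rw [← Finset.smul_sum]
    congr 1
    rw [Finset.mul_sum]
    exact Finset.sum_congr rfl fun k _ => mul_assoc _ _ _
  rw [step, add_sub_cancel_right]
end

section
/- Let A be a fine Γ-graded matrix algebra with homogeneous basis (e_α)_{α ∈ Supp(A)} and factor set σ defined by e_α e_β = σ(α,β) e_{α+β}, and let ε be any commutation factor on Γ. Then the ε-center of A is Z_ε(A) = ⊕_{α ∈ Γ_{ε,ε_σ}} A^α, where Γ_{ε,ε_σ} = {i ∈ Γ : ε(i,j) = ε_σ(i,j) for all j ∈ Γ} and ε_σ(i,j) = σ(i,j)σ(j,i)⁻¹. -/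
open DirectSum

lemma aux_span_of_rank_le_one {M : Type*} [AddCommGroup M] [Module ℂ M]
    {p : Submodule ℂ M} (hp : Module.rank ℂ p ≤ 1)
    {x y : M} (hx : x ∈ p) (hx0 : x ≠ 0) (hy : y ∈ p) : ∃ c : ℂ, y = c • x := by
  obtain ⟨v0, hv0⟩ := rank_le_one_iff.mp hp
  obtain ⟨r, hr⟩ := hv0 ⟨x, hx⟩
  obtain ⟨s, hs⟩ := hv0 ⟨y, hy⟩
  have hrx : r • (v0 : M) = x := congrArg Subtype.val hr
  have hsy : s • (v0 : M) = y := congrArg Subtype.val hs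
  have hr0 : r ≠ 0 := by
    rintro rfl
    simp only [zero_smul] at hrx
    exact hx0 hrx.symm
  refine ⟨s / r, ?_⟩
  rw [← hrx, ← hsy, smul_smul]
  field_simp

lemma aux_homog_isUnit {Γ : Type*} [AddCommGroup Γ] [DecidableEq Γ] {D : ℕ}
    (𝒜 : Γ → Submodule ℂ (Matrix (Fin D) (Fin D) ℂ)) [GradedAlgebra 𝒜]
    (hfine : ∀ α, Module.rank ℂ (𝒜 α) ≤ 1)
    {γ : Γ} {x : Matrix (Fin D) (Fin D) ℂ} (hx : x ∈ 𝒜 γ) (hx0 : x ≠ 0) :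
    IsUnit x := by
  classical
  have hnt : Nontrivial (Matrix (Fin D) (Fin D) ℂ) := nontrivial_of_ne x 0 hx0
  by_contra hU
  -- every homogeneous sandwich of total degree 0 vanishes
  have key : ∀ (μ ν : Γ) (u v : Matrix (Fin D) (Fin D) ℂ), u ∈ 𝒜 μ → v ∈ 𝒜 ν →
      μ + γ + ν = 0 → u * x * v = 0 := by
    intro μ ν u v hu hv hsum
    have hmem : u * x * v ∈ 𝒜 0 := by
      have := SetLike.mul_mem_graded (SetLike.mul_mem_graded hu hx) hv
      rwa [hsum] at this
    obtain ⟨c, hc⟩ := aux_span_of_rank_le_one (hfine 0) (SetLike.one_mem_graded 𝒜)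
      one_ne_zero hmem
    by_cases hc0 : c = 0
    · rw [hc, hc0, zero_smul]
    · exfalso
      apply hU
      rw [Matrix.isUnit_iff_isUnit_det, isUnit_iff_ne_zero]
      have hdet : u.det * x.det * v.det = c ^ D := by
        rw [← Matrix.det_mul, ← Matrix.det_mul, hc, Matrix.det_smul, Matrix.det_one,
          mul_one, Fintype.card_fin]
      intro hxd
      rw [hxd, mul_zero, zero_mul] at hdet
      exact pow_ne_zero D hc0 hdet.symm
  -- get a nonzero entry of x
  have hentry : ∃ i j, x i j ≠ 0 := by
    by_contra h
    push_neg at h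
    exact hx0 (by ext i j; simp [h])
  obtain ⟨i, j, hij⟩ := hentry
  -- identity as sum of sandwiches
  have hone : (1 : Matrix (Fin D) (Fin D) ℂ) =
      ∑ k : Fin D, (x i j)⁻¹ •
        (Matrix.single k i 1 * x * Matrix.single j k 1) := by
    ext a b
    simp only [Matrix.sum_apply, Matrix.smul_apply, Matrix.mul_apply,
      Matrix.single, Matrix.of_apply, Matrix.one_apply]
    simp [ite_and, Finset.mul_sum, mul_comm, mul_assoc, Finset.sum_ite_eq,
      Finset.sum_ite_eq', inv_mul_cancel₀ hij, mul_inv_cancel₀ hij, eq_comm (a := a)]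
  -- decompose the std basis matrices
  have hterm : ∀ k : Fin D, Matrix.single k i 1 * x * Matrix.single j k 1
      = ∑ μ ∈ (decompose 𝒜 (Matrix.single k i 1)).support,
        ∑ ν ∈ (decompose 𝒜 (Matrix.single j k 1)).support,
          (decompose 𝒜 (Matrix.single k i 1) μ : Matrix (Fin D) (Fin D) ℂ) * x *
          (decompose 𝒜 (Matrix.single j k 1) ν : Matrix (Fin D) (Fin D) ℂ) := by
    intro k
    conv_lhs => rw [← DirectSum.sum_support_decompose 𝒜 (Matrix.single k i 1),
                    ← DirectSum.sum_support_decompose 𝒜 (Matrix.single j k 1)]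
    rw [Finset.sum_mul, Finset.sum_mul_sum]
  -- projection onto degree 0 as an additive hom
  let P : Matrix (Fin D) (Fin D) ℂ →+ Matrix (Fin D) (Fin D) ℂ :=
  { toFun := fun y => ((DirectSum.decompose 𝒜 y) 0 : Matrix (Fin D) (Fin D) ℂ)
    map_zero' := by simp
    map_add' := fun y z => by simp [DirectSum.decompose_add] }
  have hP1 : P 1 = 1 := DirectSum.decompose_of_mem_same 𝒜 (SetLike.one_mem_graded 𝒜)
  have h10 : (1 : Matrix (Fin D) (Fin D) ℂ) = 0 := by
    calc (1 : Matrix (Fin D) (Fin D) ℂ) = P 1 := hP1.symm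
    _ = P (∑ k : Fin D, (x i j)⁻¹ •
        (Matrix.single k i 1 * x * Matrix.single j k 1)) := by rw [← hone]
    _ = 0 := by
        rw [map_sum]
        refine Finset.sum_eq_zero fun k _ => ?_
        rw [hterm k, Finset.smul_sum]
        rw [map_sum]
        refine Finset.sum_eq_zero fun μ hμ => ?_
        rw [Finset.smul_sum, map_sum]
        refine Finset.sum_eq_zero fun ν hν => ?_
        by_cases h0 : μ + γ + ν = 0
        · rw [key μ ν _ _ (SetLike.coe_mem _) (SetLike.coe_mem _) h0, smul_zero, map_zero]
        · have hmem : (x i j)⁻¹ • ((decompose 𝒜 (Matrix.single k i 1) μ : Matrix (Fin D) (Fin D) ℂ) * x *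
              (decompose 𝒜 (Matrix.single j k 1) ν : Matrix (Fin D) (Fin D) ℂ)) ∈ 𝒜 (μ + γ + ν) :=
            Submodule.smul_mem _ _
              (SetLike.mul_mem_graded (SetLike.mul_mem_graded (SetLike.coe_mem _) hx) (SetLike.coe_mem _))
          exact DirectSum.decompose_of_mem_ne 𝒜 hmem h0
  exact one_ne_zero h10



/-- for a fine graded matrix algebra with homogeneous basis `e` and
factor set `σ` (`e_α e_β = σ(α,β) e_{α+β}`), a nonzero homogeneous element of degree
`α` is in the ε-center iff `ε(α,β) = ε_σ(α,β) = σ(α,β) σ(β,α)⁻¹` for all `β` in the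
support. -/
theorem fineGrading_epsCenter {Γ : Type*} [AddCommGroup Γ] [DecidableEq Γ] {D : ℕ}
    (𝒜 : Γ → Submodule ℂ (Matrix (Fin D) (Fin D) ℂ)) [GradedAlgebra 𝒜]
    (hfine : ∀ α, Module.rank ℂ (𝒜 α) ≤ 1)
    (e : Γ → Matrix (Fin D) (Fin D) ℂ) (σ : Γ → Γ → ℂ)
    (he : ∀ α, 𝒜 α ≠ ⊥ → e α ∈ 𝒜 α ∧ e α ≠ 0)
    (hmul : ∀ α β, 𝒜 α ≠ ⊥ → 𝒜 β ≠ ⊥ → e α * e β = σ α β • e (α + β))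
    (hσ : ∀ α β, 𝒜 α ≠ ⊥ → 𝒜 β ≠ ⊥ → σ α β ≠ 0)
    (ε : Γ → Γ → ℂ)
    (h1 : ∀ i j, ε i j * ε j i = 1)
    (h2 : ∀ i j k, ε i (j + k) = ε i j * ε i k)
    (h3 : ∀ i j k, ε (i + j) k = ε i k * ε j k) :
    ∀ α, 𝒜 α ≠ ⊥ → ∀ a ∈ 𝒜 α, a ≠ 0 →
      ((∀ β, ∀ b ∈ 𝒜 β, a * b = ε α β • (b * a)) ↔
        (∀ β, 𝒜 β ≠ ⊥ → ε α β = σ α β * (σ β α)⁻¹)) := by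
  intro α hα a ha ha0
  classical
  obtain ⟨heα, heα0⟩ := he α hα
  obtain ⟨c, hc⟩ := aux_span_of_rank_le_one (hfine α) heα heα0 ha
  have hc0 : c ≠ 0 := by rintro rfl; rw [zero_smul] at hc; exact ha0 hc
  constructor
  · intro h β hβ
    obtain ⟨heβ, heβ0⟩ := he β hβ
    -- e α * e β ≠ 0 since both are units
    have hu : IsUnit (e α * e β) :=
      (aux_homog_isUnit 𝒜 hfine heα heα0).mul (aux_homog_isUnit 𝒜 hfine heβ heβ0)
    have hnt : Nontrivial (Matrix (Fin D) (Fin D) ℂ) := nontrivial_of_ne (e α) 0 heα0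
    have hne : e (α + β) ≠ 0 := by
      intro h0
      have := hmul α β hα hβ
      rw [h0, smul_zero] at this
      exact hu.ne_zero this
    have heq := h β (e β) heβ
    rw [hc, smul_mul_assoc, mul_smul_comm, hmul α β hα hβ, hmul β α hβ hα,
      add_comm β α] at heq
    -- heq : c • (σ α β • e (α+β)) = ε α β • (c • (σ β α • e (α+β)))
    rw [smul_smul, smul_smul, smul_smul] at heq
    have hsub : (c * σ α β - ε α β * c * σ β α) • e (α + β) = 0 := by
      rw [sub_smul, heq, sub_self]
    have hscal : c * σ α β = ε α β * c * σ β α := by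
      rcases smul_eq_zero.mp hsub with h' | h'
      · exact sub_eq_zero.mp h'
      · exact absurd h' hne
    have hσβα := hσ β α hβ hα
    have h2' : σ α β = ε α β * σ β α := by
      apply mul_left_cancel₀ hc0
      rw [hscal]; ring
    rw [h2', mul_assoc, mul_inv_cancel₀ hσβα, mul_one]
  · intro h β b hb
    by_cases hβ : 𝒜 β = ⊥
    · have : b = 0 := by rw [hβ, Submodule.mem_bot] at hb; exact hb
      simp [this]
    · obtain ⟨heβ, heβ0⟩ := he β hβ
      obtain ⟨d, hd⟩ := aux_span_of_rank_le_one (hfine β) heβ heβ0 hb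
      have hε := h β hβ
      have hσβα := hσ β α hβ hα
      rw [hc, hd, smul_mul_assoc, smul_mul_assoc, mul_smul_comm, mul_smul_comm,
        hmul α β hα hβ, hmul β α hβ hα, add_comm β α, hε]
      rw [smul_smul, smul_smul, smul_smul, smul_smul, smul_smul]
      congr 1
      field_simp
end
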